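/- (Haasdonk–Salomon–Wohlmuth a posteriori bounds.) Let (u, λ) ∈ V × M solve the mixed problem: a(u,v) + b(v,λ) = f(v) for all v ∈ V and b(u, q − λ) ≤ g(q − λ) for all q ∈ M. Let (u_n, λ_n) ∈ V × M satisfy the complementarity condition b(u_n, λ_n) = g(λ_n). Define r_e(v) := f(v) − a(u_n, v) − b(v, λ_n); let e_i ∈ Q be the Riesz representation of r_i(q) := b(u_n, q) − g(q); let Π : Q → M satisfy (q − Π(q), η)_Q ≤ 0 for all q ∈ Q, η ∈ M. Set δ₀ := ‖r_e‖_{V'}, δ₁ := ‖Π(e_i)‖_Q, δ₂ := (λ_n, Π(e_i))_Q, ĉ₁ := (1/(2α))(δ₀ + γδ₁/β), ĉ₂ := (1/α)(δ₀δ₁/β + δ₂). Then ‖u − u_n‖_V ≤ Δ_u := ĉ₁ + √(ĉ₁² + ĉ₂) and ‖λ − λ_n‖_Q ≤ (1/β)(δ₀ + γΔ_u). -/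

import Mathlib

open scoped RealInnerProductSpace

set_option maxHeartbeats 1000000 in
/-- Haasdonk–Salomon–Wohlmuth a posteriori error bounds for the primal-only approach. -/
theorem stmt_10 {V Q : Type*}
    [NormedAddCommGroup V] [InnerProductSpace ℝ V] [CompleteSpace V]
    [NormedAddCommGroup Q] [InnerProductSpace ℝ Q] [CompleteSpace Q]
    (a : V →L[ℝ] V →L[ℝ] ℝ) (α γ : ℝ) (hα : 0 < α)
    (hcoer : ∀ v : V, α * ‖v‖ ^ 2 ≤ a v v)
    (hγ : ∀ w v : V, a w v ≤ γ * (‖w‖ * ‖v‖))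
    (b : V →L[ℝ] Q →L[ℝ] ℝ) (β : ℝ) (hβ : 0 < β)
    (hinfsup : ∀ q : Q, β * ‖q‖ ≤ ‖b.flip q‖)
    (f : V →L[ℝ] ℝ) (g : Q →L[ℝ] ℝ)
    (M : Set Q) (hMne : M.Nonempty) (hMcl : IsClosed M) (hMcv : Convex ℝ M)
    (hMcone : ∀ c : ℝ, 0 ≤ c → ∀ q ∈ M, c • q ∈ M)
    (u un : V) (lam lamn : Q) (hlam : lam ∈ M) (hlamn : lamn ∈ M)
    (hsol1 : ∀ v : V, a u v + b v lam = f v)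
    (hsol2 : ∀ q ∈ M, b u (q - lam) ≤ g (q - lam))
    (hcomp : b un lamn = g lamn)
    (ei : Q) (hei : ∀ q : Q, ⟪ei, q⟫ = b un q - g q)
    (Pi : Q → Q) (hPiM : ∀ q : Q, Pi q ∈ M)
    (hPi : ∀ q : Q, ∀ η ∈ M, ⟪q - Pi q, η⟫ ≤ 0)
    (δ₀ δ₁ δ₂ c₁ c₂ : ℝ)
    (hδ₀ : δ₀ = ‖f - a un - b.flip lamn‖)
    (hδ₁ : δ₁ = ‖Pi ei‖) (hδ₂ : δ₂ = ⟪lamn, Pi ei⟫)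
    (hc₁ : c₁ = (1 / (2 * α)) * (δ₀ + γ * δ₁ / β))
    (hc₂ : c₂ = (1 / α) * (δ₀ * δ₁ / β + δ₂))
    (hpos : 0 ≤ c₁ ^ 2 + c₂) :
    ‖u - un‖ ≤ c₁ + Real.sqrt (c₁ ^ 2 + c₂) ∧
    ‖lam - lamn‖ ≤ (1 / β) * (δ₀ + γ * (c₁ + Real.sqrt (c₁ ^ 2 + c₂))) := by
  by_cases hV : ∀ v : V, v = 0
  · -- trivial case: V = 0, hence Q = 0 by inf-sup, everything vanishes
    have hQ : ∀ q : Q, q = 0 := by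
      intro q
      have hbz : b.flip q = 0 := by
        ext v; rw [hV v]; simp
      have := hinfsup q
      rw [hbz] at this
      simp at this
      have : ‖q‖ ≤ 0 := by nlinarith
      simpa using le_antisymm this (norm_nonneg q)
    have hδ₀0 : δ₀ = 0 := by
      rw [hδ₀]
      have : f - a un - b.flip lamn = 0 := by
        ext v; rw [hV v]; simp
      rw [this]; simp
    have hδ₁0 : δ₁ = 0 := by rw [hδ₁, hQ (Pi ei)]; simp
    have hδ₂0 : δ₂ = 0 := by rw [hδ₂, hQ (Pi ei)]; simp
    have hc₁0 : c₁ = 0 := by rw [hc₁, hδ₀0, hδ₁0]; ring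
    have hc₂0 : c₂ = 0 := by rw [hc₂, hδ₀0, hδ₁0, hδ₂0]; ring
    rw [hV (u - un), hQ (lam - lamn), hc₁0, hc₂0, hδ₀0]
    simp
  · push_neg at hV
    obtain ⟨v₀, hv₀⟩ := hV
    have hγα : α ≤ γ := by
      have h1 := hcoer v₀
      have h2 := hγ v₀ v₀
      have hn : 0 < ‖v₀‖ := norm_pos_iff.mpr hv₀
      have hsq : ‖v₀‖ ^ 2 = ‖v₀‖ * ‖v₀‖ := sq ‖v₀‖
      nlinarith [mul_pos hn hn]
    have hγ0 : 0 ≤ γ := le_trans hα.le hγα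
    set R : V →L[ℝ] ℝ := f - a un - b.flip lamn with hR
    -- residual identity
    have hres : ∀ v : V, R v = a (u - un) v + b v (lam - lamn) := by
      intro v
      have h1 := hsol1 v
      simp only [hR, ContinuousLinearMap.sub_apply, ContinuousLinearMap.flip_apply,
        map_sub, ContinuousLinearMap.sub_apply] at *
      linarith
    set eu : V := u - un with heu
    set el : Q := lam - lamn with hel
    have hδ₀nn : 0 ≤ δ₀ := hδ₀ ▸ norm_nonneg _
    have hδ₁nn : 0 ≤ δ₁ := hδ₁ ▸ norm_nonneg _
    -- Step C : β ‖el‖ ≤ δ₀ + γ ‖eu‖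
    have habs : ∀ v : V, |a eu v| ≤ γ * ‖eu‖ * ‖v‖ := by
      intro v
      rw [abs_le]
      constructor
      · have := hγ eu (-v)
        simp only [map_neg, norm_neg] at this
        linarith [this]
      · have := hγ eu v; linarith
    have hRle : ∀ v : V, |R v| ≤ δ₀ * ‖v‖ := by
      intro v
      rw [hδ₀]
      exact le_trans (ContinuousLinearMap.le_opNorm R v) le_rfl
    have hstepC : β * ‖el‖ ≤ δ₀ + γ * ‖eu‖ := by
      refine le_trans (hinfsup el) ?_
      refine ContinuousLinearMap.opNorm_le_bound _ (by positivity) ?_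
      intro v
      have hbv : b v el = R v - a eu v := by
        have := hres v; linarith
      rw [ContinuousLinearMap.flip_apply, hbv]
      calc |R v - a eu v| ≤ |R v| + |a eu v| := abs_sub _ _
        _ ≤ δ₀ * ‖v‖ + γ * ‖eu‖ * ‖v‖ := add_le_add (hRle v) (habs v)
        _ = (δ₀ + γ * ‖eu‖) * ‖v‖ := by ring
    have hel_le : ‖el‖ ≤ (1 / β) * (δ₀ + γ * ‖eu‖) := by
      have h := (le_div_iff₀ hβ).mpr (by linarith : ‖el‖ * β ≤ δ₀ + γ * ‖eu‖)
      calc ‖el‖ ≤ (δ₀ + γ * ‖eu‖) / β := h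
        _ = (1 / β) * (δ₀ + γ * ‖eu‖) := by ring
    -- Step B : - b eu el ≤ δ₁ * ‖el‖ + δ₂
    have hei_lamn : ⟪ei, lamn⟫ = 0 := by rw [hei lamn, hcomp]; ring
    have hB : -(b eu el) ≤ δ₁ * ‖el‖ + δ₂ := by
      have h1 : b u (lamn - lam) ≤ g (lamn - lam) := hsol2 lamn hlamn
      have h2 : b un el = ⟪ei, el⟫ + g el := by
        have := hei el; linarith
      -- expand linearity
      have hexp : b eu el = b u el - b un el := by
        simp only [heu, map_sub, ContinuousLinearMap.sub_apply]
      have hgnel : b u el ≥ g el := by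
        have hneg : lamn - lam = -el := by simp [hel]
        rw [hneg, map_neg, map_neg] at h1
        linarith
      have h3 : -(b eu el) ≤ ⟪ei, el⟫ := by
        rw [hexp]; linarith
      have h4 : ⟪ei, el⟫ = ⟪ei, lam⟫ := by
        simp only [hel, inner_sub_right, hei_lamn]; ring
      have h5 : ⟪ei, lam⟫ ≤ ⟪Pi ei, lam⟫ := by
        have := hPi ei lam hlam
        rw [inner_sub_left] at this
        linarith
      have h6 : ⟪Pi ei, lam⟫ = ⟪Pi ei, el⟫ + ⟪Pi ei, lamn⟫ := by
        simp only [hel, inner_sub_right]; ring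
      have h7 : ⟪Pi ei, el⟫ ≤ δ₁ * ‖el‖ := by
        calc ⟪Pi ei, el⟫ ≤ ‖Pi ei‖ * ‖el‖ := real_inner_le_norm _ _
          _ = δ₁ * ‖el‖ := by rw [hδ₁]
      have h8 : ⟪Pi ei, lamn⟫ = δ₂ := by rw [hδ₂, real_inner_comm]
      linarith
    -- Step A + D
    have hA : α * ‖eu‖ ^ 2 ≤ R eu - b eu el := by
      have := hcoer eu
      have h := hres eu
      linarith
    have hRe : R eu ≤ δ₀ * ‖eu‖ := le_trans (le_abs_self _) (hRle eu)
    set t : ℝ := ‖eu‖ with ht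
    have htnn : 0 ≤ t := norm_nonneg _
    have hmain : α * t ^ 2 ≤ δ₀ * t + δ₁ * ((1 / β) * (δ₀ + γ * t)) + δ₂ := by
      have h9 : δ₁ * ‖el‖ ≤ δ₁ * ((1 / β) * (δ₀ + γ * t)) :=
        mul_le_mul_of_nonneg_left hel_le hδ₁nn
      linarith
    -- quadratic: t² ≤ 2 c₁ t + c₂
    have hquad : t ^ 2 ≤ 2 * c₁ * t + c₂ := by
      have hα' : α ≠ 0 := ne_of_gt hα
      have hβ' : β ≠ 0 := ne_of_gt hβ
      have heq : 2 * c₁ * t + c₂ = (δ₀ * t + δ₁ * (1 / β * (δ₀ + γ * t)) + δ₂) / α := by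
        rw [hc₁, hc₂]; field_simp; ring
      rw [heq, le_div_iff₀ hα]
      linarith [hmain]
    have hsq : (t - c₁) ^ 2 ≤ c₁ ^ 2 + c₂ := by nlinarith
    have htle : t ≤ c₁ + Real.sqrt (c₁ ^ 2 + c₂) := by
      have h1 : |t - c₁| ≤ Real.sqrt (c₁ ^ 2 + c₂) := by
        rw [← Real.sqrt_sq_eq_abs]
        exact Real.sqrt_le_sqrt hsq
      have := le_of_abs_le h1
      linarith
    constructor
    · exact htle
    · have h1 : ‖el‖ ≤ (1 / β) * (δ₀ + γ * t) := hel_le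
      have h2 : γ * t ≤ γ * (c₁ + Real.sqrt (c₁ ^ 2 + c₂)) :=
        mul_le_mul_of_nonneg_left htle hγ0
      have h3 : (1 / β) * (δ₀ + γ * t) ≤ (1 / β) * (δ₀ + γ * (c₁ + Real.sqrt (c₁ ^ 2 + c₂))) := by
        apply mul_le_mul_of_nonneg_left _ (by positivity)
        linarith
      exact le_trans h1 h3
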